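/- arXiv:2602.11573 — 4 statements merged into one kernel-verified Lean document; each statement's English description precedes it below -/
import Mathlib

section
/- For any R and R' with R ≤ R' ≤ L, the pruned neighbor set PN(R) obtained from the first R candidates is a subset of the pruned neighbor set PN(R') obtained from the first R' candidates. -/
open Classical in
noncomputable def prune {X : Type*} [MetricSpace X] (u : X) (α : ℝ) (M : ℕ) :
    List X → List X → List X
  | [], PN => PN
  | v :: rest, PN =>
    if M ≤ PN.length then PN
    else if ∃ w ∈ PN, α * dist v w < dist u v then prune u α M rest PN
    else prune u α M rest (PN ++ [v])

lemma prune_full {X : Type*} [MetricSpace X] (u : X) (α : ℝ) (M : ℕ)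
    (l PN : List X) (h : M ≤ PN.length) : prune u α M l PN = PN := by
  cases l with
  | nil => rfl
  | cons v rest => simp [prune, h]

lemma prune_prefix {X : Type*} [MetricSpace X] (u : X) (α : ℝ) (M : ℕ)
    (l : List X) : ∀ PN : List X, PN <+: prune u α M l PN := by
  induction l with
  | nil => intro PN; exact List.prefix_refl _
  | cons v rest ih =>
    intro PN
    by_cases h : M ≤ PN.length
    · simp [prune, h]
    · by_cases h2 : ∃ w ∈ PN, α * dist v w < dist u v
      · simpa [prune, h, h2] using ih PN
      · have h3 : PN <+: PN ++ [v] := List.prefix_append PN [v]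
        have h4 := ih (PN ++ [v])
        simp only [prune, h, h2, if_false]
        exact h3.trans h4

lemma prune_append {X : Type*} [MetricSpace X] (u : X) (α : ℝ) (M : ℕ)
    (l1 l2 : List X) : ∀ PN : List X,
    prune u α M (l1 ++ l2) PN = prune u α M l2 (prune u α M l1 PN) := by
  induction l1 with
  | nil => intro PN; rfl
  | cons v rest ih =>
    intro PN
    by_cases h : M ≤ PN.length
    · simp [prune, h, prune_full u α M l2 PN h]
    · by_cases h2 : ∃ w ∈ PN, α * dist v w < dist u v
      · simp only [List.cons_append, prune, h, h2, if_false, if_true]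
        exact ih PN
      · simp only [List.cons_append, prune, h, h2, if_false]
        exact ih (PN ++ [v])

theorem stmt1 {X : Type*} [MetricSpace X] (u : X) (C : List X)
    (hsort : C.Pairwise fun a b => dist u a ≤ dist u b)
    (α : ℝ) (hα : 1 ≤ α) (M : ℕ) (hM : 1 ≤ M)
    (R R' : ℕ) (hRR' : R ≤ R') (hR'L : R' ≤ C.length) :
    prune u α M (C.take R) [] ⊆ prune u α M (C.take R') [] := by
  have hsplit : C.take R' = C.take R ++ (C.drop R).take (R' - R) := by
    have : R' = R + (R' - R) := by omega
    rw [this, List.take_add]; simp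
  rw [hsplit, prune_append]
  exact (prune_prefix u α M _ _).subset
end

section
/- For the same candidate list and the same α, the greedy pruning result is monotone in the degree bound: if M ≤ M' then PN(M) ⊆ PN(M'). In fact PN(M) is exactly the set of the first min(M, |PN(∞)|) elements (in candidate order) of the unbounded pruning result PN(∞). -/
open Classical in
noncomputable def pruneInf {X : Type*} [MetricSpace X] (u : X) (α : ℝ) :
    List X → List X → List X
  | [], PN => PN
  | v :: rest, PN =>
    if ∃ w ∈ PN, α * dist v w < dist u v then pruneInf u α rest PN
    else pruneInf u α rest (PN ++ [v])

lemma pruneInf_prefix {X : Type*} [MetricSpace X] (u : X) (α : ℝ) :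
    ∀ (rest PN : List X), PN <+: pruneInf u α rest PN := by
  intro rest
  induction rest with
  | nil => intro PN; simp [pruneInf]
  | cons v rest ih =>
    intro PN
    rw [pruneInf]
    split
    · exact ih PN
    · exact ((PN.prefix_append [v]).trans (ih (PN ++ [v])))

lemma prune_eq_take {X : Type*} [MetricSpace X] (u : X) (α : ℝ) (M : ℕ) :
    ∀ (rest PN : List X), PN.length ≤ M →
      prune u α M rest PN = (pruneInf u α rest PN).take M := by
  intro rest
  induction rest with
  | nil => intro PN h; simp [prune, pruneInf, List.take_of_length_le h]
  | cons v rest ih =>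
    intro PN h
    rw [prune, pruneInf]
    by_cases hM : M ≤ PN.length
    · have hlen : PN.length = M := le_antisymm h hM
      rw [if_pos hM]
      split
      · obtain ⟨s, hs⟩ := pruneInf_prefix u α rest PN
        rw [← hs, ← hlen, List.take_left]
      · obtain ⟨s, hs⟩ := pruneInf_prefix u α rest (PN ++ [v])
        rw [← hs, List.append_assoc, ← hlen, List.take_left]
    · rw [if_neg hM]
      split
      · exact ih PN h
      · exact ih (PN ++ [v]) (by simpa using Nat.lt_of_not_le hM)

theorem stmt3 {X : Type*} [MetricSpace X] (u : X) (C : List X)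
    (hsort : C.Pairwise fun a b => dist u a ≤ dist u b)
    (α : ℝ) (hα : 1 ≤ α) :
    (∀ M M' : ℕ, 1 ≤ M → M ≤ M' → prune u α M C [] ⊆ prune u α M' C []) ∧
    (∀ M : ℕ, 1 ≤ M →
      prune u α M C [] = (pruneInf u α C []).take (min M (pruneInf u α C []).length)) := by
  have key : ∀ M : ℕ, prune u α M C [] = (pruneInf u α C []).take M := by
    intro M
    exact prune_eq_take u α M C [] (by simp)
  have taketake : ∀ M : ℕ,
      (pruneInf u α C []).take (min M (pruneInf u α C []).length)
        = (pruneInf u α C []).take M := by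
    intro M
    rw [← List.take_take, List.take_length]
  constructor
  · intro M M' _ hMM'
    rw [key M, key M']
    have : (pruneInf u α C []).take M = ((pruneInf u α C []).take M').take M := by
      rw [List.take_take, min_eq_left hMM']
    rw [this]
    exact List.take_subset _ _
  · intro M _
    rw [key M, taketake M]
end

section
/- The hypervolume improvement is subadditive over batches: for finite point sets S₁, S₂ (each point dominating the reference point r) and a finite set Y, HVI(S₁ ∪ S₂, Y, r) ≤ HVI(S₁, Y, r) + HVI(S₂, Y, r). -/
noncomputable def HV (r : ℝ × ℝ) (Y : Finset (ℝ × ℝ)) : ℝ :=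
  (MeasureTheory.volume (⋃ y ∈ Y, Set.Icc r.1 y.1 ×ˢ Set.Icc r.2 y.2)).toReal

noncomputable def HVI (S Y : Finset (ℝ × ℝ)) (r : ℝ × ℝ) : ℝ :=
  HV r (Y ∪ S) - HV r Y

open MeasureTheory

noncomputable def Ureg (r : ℝ × ℝ) (Y : Finset (ℝ × ℝ)) : Set (ℝ × ℝ) :=
  ⋃ y ∈ Y, Set.Icc r.1 y.1 ×ˢ Set.Icc r.2 y.2

lemma Ureg_fin (r : ℝ × ℝ) (Y : Finset (ℝ × ℝ)) : volume (Ureg r Y) < ⊤ := by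
  refine (measure_biUnion_lt_top Y.finite_toSet fun y _ => ?_)
  have h : IsCompact (Set.Icc r.1 y.1 ×ˢ Set.Icc r.2 y.2) := isCompact_Icc.prod isCompact_Icc
  exact IsCompact.measure_lt_top (μ := (volume : Measure (ℝ × ℝ))) h

lemma Ureg_meas (r : ℝ × ℝ) (Y : Finset (ℝ × ℝ)) : MeasurableSet (Ureg r Y) :=
  Y.measurableSet_biUnion fun y _ => (measurableSet_Icc.prod measurableSet_Icc)

lemma HV_eq (r : ℝ × ℝ) (Y : Finset (ℝ × ℝ)) : HV r Y = (volume (Ureg r Y)).toReal := rfl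

lemma Ureg_union (r : ℝ × ℝ) (Y S : Finset (ℝ × ℝ)) :
    Ureg r (Y ∪ S) = Ureg r Y ∪ Ureg r S := by
  simp only [Ureg, Finset.coe_union, Finset.mem_union]
  exact Set.biUnion_union _ _ _

theorem stmt11 (r : ℝ × ℝ) (Y S₁ S₂ : Finset (ℝ × ℝ))
    (hY : ∀ y ∈ Y, r.1 ≤ y.1 ∧ r.2 ≤ y.2)
    (hS₁ : ∀ y ∈ S₁, r.1 ≤ y.1 ∧ r.2 ≤ y.2)
    (hS₂ : ∀ y ∈ S₂, r.1 ≤ y.1 ∧ r.2 ≤ y.2) :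
    HVI (S₁ ∪ S₂) Y r ≤ HVI S₁ Y r + HVI S₂ Y r := by
  set A := Ureg r Y
  set B := Ureg r (Y ∪ S₁)
  set C := Ureg r (Y ∪ S₂)
  have hBC : Ureg r (Y ∪ (S₁ ∪ S₂)) = B ∪ C := by
    simp only [A, B, C, Ureg_union]
    ext x; simp; tauto
  have hsub : A ⊆ B ∩ C := by
    simp only [A, B, C, Ureg_union]
    exact Set.subset_inter Set.subset_union_left Set.subset_union_left
  have key : volume (B ∪ C) + volume A ≤ volume B + volume C := by
    calc volume (B ∪ C) + volume A ≤ volume (B ∪ C) + volume (B ∩ C) :=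
          add_le_add le_rfl (measure_mono hsub)
      _ = volume B + volume C := measure_union_add_inter _ (Ureg_meas r _)
  have hA := Ureg_fin r Y
  have hB := Ureg_fin r (Y ∪ S₁)
  have hC := Ureg_fin r (Y ∪ S₂)
  have hBCfin : volume (B ∪ C) < ⊤ :=
    (measure_union_le _ _).trans_lt (ENNReal.add_lt_top.mpr ⟨hB, hC⟩)
  have key' : (volume (B ∪ C)).toReal + (volume A).toReal ≤
      (volume B).toReal + (volume C).toReal := by
    rw [← ENNReal.toReal_add hBCfin.ne hA.ne, ← ENNReal.toReal_add hB.ne hC.ne]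
    exact ENNReal.toReal_mono (ENNReal.add_ne_top.mpr ⟨hB.ne, hC.ne⟩) key
  simp only [HVI, HV_eq, hBC] at *
  linarith [key']
end

section
/- For the greedy pruning with α ≥ 1 in a metric space, any two accepted neighbors v, w ∈ PN with δ(u,w) ≤ δ(u,v) satisfy δ(v, w) ≥ δ(u, v)/α ≥ δ(u, w)/α; consequently, the accepted neighbors within distance d of u form a (d/α)-separated set, so in a doubling metric space the out-degree of u restricted to any annulus {v : d ≤ δ(u,v) ≤ 2d} is bounded by a constant depending only on α and the doubling dimension. -/
open Classical in
lemma prune_pairwise {X : Type*} [MetricSpace X] (u : X) (α : ℝ) (M : ℕ) :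
    ∀ (C PN : List X),
    C.Pairwise (fun a b => dist u a ≤ dist u b) →
    (∀ w ∈ PN, ∀ v ∈ C, dist u w ≤ dist u v) →
    PN.Pairwise (fun w v => dist u v ≤ α * dist v w ∧ dist u w ≤ dist u v) →
    (prune u α M C PN).Pairwise
      (fun w v => dist u v ≤ α * dist v w ∧ dist u w ≤ dist u v) := by
  intro C
  induction C with
  | nil => intro PN _ _ h; simpa [prune] using h
  | cons v rest ih =>
    intro PN hsort hle hpw
    rw [prune]
    split
    · exact hpw
    · split
      · exact ih PN hsort.of_cons (fun w hw x hx => hle w hw x (List.mem_cons_of_mem _ hx)) hpw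
      · rename_i hfull hno
        push_neg at hno
        refine ih (PN ++ [v]) hsort.of_cons ?_ ?_
        · intro w hw x hx
          rcases List.mem_append.1 hw with h | h
          · exact hle w h x (List.mem_cons_of_mem _ hx)
          · simp only [List.mem_singleton] at h
            subst h
            exact List.rel_of_pairwise_cons hsort hx
        · rw [List.pairwise_append]
          refine ⟨hpw, by simp, ?_⟩
          intro w hw x hx
          simp only [List.mem_singleton] at hx
          subst hx
          exact ⟨hno w hw, hle w hw _ List.mem_cons_self⟩

theorem stmt19 {X : Type*} [MetricSpace X] (u : X) (C : List X)
    (hsort : C.Pairwise fun a b => dist u a ≤ dist u b)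
    (α : ℝ) (hα : 1 ≤ α) (M : ℕ) (hM : 1 ≤ M)
    (lam : ℕ)
    (hdoubling : ∀ (x : X) (r : ℝ), 0 < r → ∃ s : Finset X, s.card ≤ lam ∧
      Metric.closedBall x (2 * r) ⊆ ⋃ y ∈ s, Metric.closedBall y r)
    (d : ℝ) (hd : 0 < d) :
    (∀ v ∈ prune u α M C [], ∀ w ∈ prune u α M C [], v ≠ w → dist u w ≤ dist u v →
      dist u v / α ≤ dist v w ∧ dist u w / α ≤ dist u v / α) ∧
    (∀ S : Finset X, (∀ x ∈ S, x ∈ Metric.closedBall u (2 * d)) →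
      (∀ x ∈ S, ∀ y ∈ S, x ≠ y → d / α ≤ dist x y) →
      S.card ≤ lam ^ Nat.clog 2 ⌈8 * α⌉₊) := by
  classical
  have hα0 : (0:ℝ) < α := lt_of_lt_of_le one_pos hα
  constructor
  · -- separation
    have hpw := prune_pairwise u α M C [] hsort (by simp) (by simp)
    have hpw' : (prune u α M C []).Pairwise (fun w v =>
        (dist u v ≤ α * dist v w ∧ dist u w ≤ dist u v) ∨
        (dist u w ≤ α * dist w v ∧ dist u v ≤ dist u w)) :=
      hpw.imp Or.inl
    intro v hv w hw hne hle
    have key : dist u v ≤ α * dist v w := by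
      haveI : Std.Symm (fun w v : X =>
          (dist u v ≤ α * dist v w ∧ dist u w ≤ dist u v) ∨
          (dist u w ≤ α * dist w v ∧ dist u v ≤ dist u w)) := ⟨fun _ _ => Or.symm⟩
      have hor := List.Pairwise.forall hpw' hw hv hne.symm
      rcases hor with ⟨h1, _⟩ | ⟨h1, h2⟩
      · exact h1
      · have heq : dist u v = dist u w := le_antisymm h2 hle
        rw [heq, dist_comm v w]; exact h1
    constructor
    · rw [div_le_iff₀ hα0]
      calc dist u v ≤ α * dist v w := key
        _ = dist v w * α := mul_comm _ _
    · gcongr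
  · -- packing
    have key : ∀ k : ℕ, ∀ (x : X) (r : ℝ), 0 < r → ∃ s : Finset X,
        s.card ≤ lam ^ k ∧
        Metric.closedBall x (2 ^ k * r) ⊆ ⋃ y ∈ s, Metric.closedBall y r := by
      intro k
      induction k with
      | zero =>
        intro x r hr
        refine ⟨{x}, by simp, ?_⟩
        intro z hz
        simp only [Finset.mem_singleton, Set.mem_iUnion, exists_prop]
        exact ⟨x, rfl, by simpa using hz⟩
      | succ k ih =>
        intro x r hr
        obtain ⟨s0, hs0card, hs0cov⟩ := hdoubling x (2 ^ k * r) (by positivity)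
        choose t htcard htcov using fun y : X => ih y r hr
        refine ⟨s0.biUnion t, ?_, ?_⟩
        · calc (s0.biUnion t).card ≤ ∑ y ∈ s0, (t y).card := Finset.card_biUnion_le
            _ ≤ ∑ _y ∈ s0, lam ^ k := Finset.sum_le_sum fun y _ => htcard y
            _ = s0.card * lam ^ k := by simp [Finset.sum_const]
            _ ≤ lam * lam ^ k := Nat.mul_le_mul_right _ hs0card
            _ = lam ^ (k + 1) := by rw [pow_succ, mul_comm]
        · intro z hz
          have hz' : z ∈ Metric.closedBall x (2 * (2 ^ k * r)) := by
            have : (2:ℝ) ^ (k+1) * r = 2 * (2 ^ k * r) := by ring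
            rwa [this] at hz
          obtain ⟨y, hy, hzy⟩ := by
            have := hs0cov hz'
            simpa only [Set.mem_iUnion, exists_prop] using this
          have := htcov y hzy
          simp only [Set.mem_iUnion, exists_prop] at this ⊢
          obtain ⟨w, hw, hzw⟩ := this
          exact ⟨w, Finset.mem_biUnion.2 ⟨y, hy, hw⟩, hzw⟩
    intro S hS hsep
    set k := Nat.clog 2 ⌈8 * α⌉₊ with hk
    have h2k : (8:ℝ) * α ≤ 2 ^ k := by
      calc (8:ℝ) * α ≤ (⌈8 * α⌉₊ : ℝ) := Nat.le_ceil _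
        _ ≤ ((2 ^ k : ℕ) : ℝ) := by exact_mod_cast Nat.le_pow_clog (by norm_num) _
        _ = 2 ^ k := by push_cast; ring
    set r := 2 * d / 2 ^ k with hr
    have hrpos : 0 < r := by positivity
    obtain ⟨s, hscard, hscov⟩ := key k u r hrpos
    have hball : Metric.closedBall u (2 * d) ⊆ ⋃ y ∈ s, Metric.closedBall y r := by
      have : (2:ℝ) ^ k * r = 2 * d := by
        rw [hr]; field_simp
      rwa [this] at hscov
    have hpick : ∀ x ∈ S, ∃ c ∈ s, x ∈ Metric.closedBall c r := by
      intro x hx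
      have := hball (hS x hx)
      simpa only [Set.mem_iUnion, exists_prop] using this
    choose c hc hxc using hpick
    have h2r : 2 * r < d / α := by
      have hrw : 2 * r = 4 * d / 2 ^ k := by rw [hr]; ring
      rw [hrw, div_lt_div_iff₀ (by positivity) hα0]
      nlinarith [pow_pos (show (0:ℝ) < 2 by norm_num) k]
    calc S.card ≤ s.card := by
          apply Finset.card_le_card_of_injOn (fun x => if h : x ∈ S then c x h else u)
          · intro x hx
            rw [Finset.mem_coe] at hx
            simp only [dif_pos hx]
            exact hc x hx
          · intro x hx y hy hxy
            simp only [Finset.mem_coe] at hx hy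
            simp only [dif_pos hx, dif_pos hy] at hxy
            by_contra hne
            have hsepxy := hsep x hx y hy hne
            have hdx : dist x (c x hx) ≤ r := Metric.mem_closedBall.1 (hxc x hx)
            have hdy : dist y (c y hy) ≤ r := Metric.mem_closedBall.1 (hxc y hy)
            have : dist x y ≤ 2 * r := by
              calc dist x y ≤ dist x (c x hx) + dist (c x hx) y := dist_triangle _ _ _
                _ = dist x (c x hx) + dist y (c y hy) := by rw [hxy, dist_comm (c y hy) y]
                _ ≤ r + r := add_le_add hdx hdy
                _ = 2 * r := by ring
            linarith
        _ ≤ lam ^ k := hscard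
end
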